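/- arXiv:1510.02521 — 2 statements merged into one kernel-verified Lean document; each statement's English description precedes it below -/
import Mathlib

section
/- Let n ≥ 3 and let L be the circulant Latin square of order n. For every i ∈ ZMod n, the subgraph of the Latin square graph Γ(L) induced on the union of right diagonals T_i ∪ T_{i+1}, where T_j = {(r, r + j) : r ∈ ZMod n}, is isomorphic to the Möbius ladder of order 2n. -/
/-- The Latin square graph of the circulant Latin square of order `n` (the Cayley table of
`ZMod n`, with symbol `r + c` in cell `(r, c)`). -/
def circGraph (n : ℕ) : SimpleGraph (ZMod n × ZMod n) where
  Adj x y := x ≠ y ∧ (x.1 = y.1 ∨ x.2 = y.2 ∨ x.1 + x.2 = y.1 + y.2)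
  symm := by
    constructor
    rintro x y ⟨hne, h⟩
    refine ⟨hne.symm, ?_⟩
    rcases h with h | h | h
    · exact Or.inl h.symm
    · exact Or.inr (Or.inl h.symm)
    · exact Or.inr (Or.inr h.symm)
  loopless := by constructor; rintro x ⟨hne, -⟩; exact hne rfl

/-- The Möbius ladder of order `2n`: the graph on `ZMod (2n)` where distinct vertices `x, y`
are adjacent iff `y - x ∈ {1, -1, n}`. -/
def mobiusLadder (n : ℕ) : SimpleGraph (ZMod (2 * n)) where
  Adj x y := x ≠ y ∧ (y - x = 1 ∨ y - x = -1 ∨ y - x = (n : ZMod (2 * n)))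
  symm := by
    have hn : (n : ZMod (2 * n)) + (n : ZMod (2 * n)) = 0 := by
      have h := ZMod.natCast_self (2 * n)
      push_cast at h
      linear_combination h
    constructor
    rintro x y ⟨hne, h⟩
    refine ⟨hne.symm, ?_⟩
    have hsub : x - y = -(y - x) := by ring
    rcases h with h | h | h
    · exact Or.inr (Or.inl (by rw [hsub, h]))
    · exact Or.inl (by rw [hsub, h, neg_neg])
    · exact Or.inr (Or.inr (by rw [hsub, h, neg_eq_of_add_eq_zero_left hn]))
  loopless := by constructor; rintro x ⟨hne, -⟩; exact hne rfl


private lemma castEq {m : ℕ} (x y : ℕ) (hx : x < 2*m) (hy : y < 2*m) :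
    ((x : ZMod m) = (y : ZMod m)) ↔ (x = y ∨ x = y + m ∨ y = x + m) := by
  rw [ZMod.natCast_eq_natCast_iff]
  unfold Nat.ModEq
  rcases lt_or_ge x m with h1 | h1 <;> rcases lt_or_ge y m with h2 | h2
  · rw [Nat.mod_eq_of_lt h1, Nat.mod_eq_of_lt h2]; omega
  · rw [Nat.mod_eq_of_lt h1, Nat.mod_eq_sub_mod h2, Nat.mod_eq_of_lt (by omega)]; omega
  · rw [Nat.mod_eq_sub_mod h1, Nat.mod_eq_of_lt (by omega), Nat.mod_eq_of_lt h2]; omega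
  · rw [Nat.mod_eq_sub_mod h1, Nat.mod_eq_sub_mod h2, Nat.mod_eq_of_lt (by omega),
      Nat.mod_eq_of_lt (by omega)]; omega

private lemma mdiff1 {n : ℕ} (u v : ℕ) (hu : u < 2*n) (hv : v < 2*n) :
    ((v : ZMod (2*n)) - (u : ZMod (2*n)) = 1) ↔ (v = u+1 ∨ v = u+1+2*n ∨ u+1 = v+2*n) := by
  rw [sub_eq_iff_eq_add,
    show ((1 : ZMod (2*n)) + (u : ZMod (2*n))) = ((u+1 : ℕ) : ZMod (2*n)) by push_cast; ring]
  exact castEq v (u+1) (by omega) (by omega)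

private lemma mdiffneg {n : ℕ} (u v : ℕ) (hu : u < 2*n) (hv : v < 2*n) :
    ((v : ZMod (2*n)) - (u : ZMod (2*n)) = -1) ↔ (v+1 = u ∨ v+1 = u+2*n ∨ u = v+1+2*n) := by
  rw [show (((v : ZMod (2*n)) - (u : ZMod (2*n)) = -1)) ↔
      (((v+1 : ℕ) : ZMod (2*n)) = ((u : ℕ) : ZMod (2*n))) by
    push_cast
    constructor <;> intro h <;> linear_combination h]
  exact castEq (v+1) u (by omega) (by omega)

private lemma mdiffn {n : ℕ} (u v : ℕ) (hu : u < 2*n) (hv : v < 2*n) :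
    ((v : ZMod (2*n)) - (u : ZMod (2*n)) = (n : ZMod (2*n))) ↔
      (v = u+n ∨ v = u+n+2*n ∨ u+n = v+2*n) := by
  rw [sub_eq_iff_eq_add,
    show ((n : ZMod (2*n)) + (u : ZMod (2*n))) = ((u+n : ℕ) : ZMod (2*n)) by push_cast; ring]
  exact castEq v (u+n) (by omega) (by omega)

set_option maxHeartbeats 1000000 in
/-- For the circulant Latin square of order `n ≥ 3`, the subgraph induced by the union of
two consecutive right diagonals `T_i ∪ T_{i+1}` is isomorphic to the Möbius ladder of
order `2n`. -/
theorem stmt_16 (n : ℕ) (hn : 3 ≤ n) (i : ZMod n) :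
    Nonempty
      (((circGraph n).induce
          ({p | ∃ r : ZMod n, p = (r, r + i)} ∪ {p | ∃ r : ZMod n, p = (r, r + i + 1)} :
            Set (ZMod n × ZMod n))) ≃g
        mobiusLadder n) := by
  haveI : NeZero n := ⟨by omega⟩
  haveI : NeZero (2 * n) := ⟨by omega⟩
  have hone : (1 : ZMod n) ≠ 0 := by
    haveI : Fact (1 < n) := ⟨by omega⟩
    exact one_ne_zero
  have hcv : ∀ r : ZMod n, ((r.val : ℕ) : ZMod n) = r := fun r => ZMod.natCast_rightInverse r
  have hcv2 : ∀ x : ZMod (2*n), ((x.val : ℕ) : ZMod (2*n)) = x := fun x =>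
    ZMod.natCast_rightInverse x
  refine ⟨⟨⟨fun v => ((2 * v.1.1.val + if v.1.2 = v.1.1 + i then 0 else 1 : ℕ) : ZMod (2*n)),
    fun x => ⟨(((x.val / 2 : ℕ) : ZMod n),
      ((x.val / 2 : ℕ) : ZMod n) + i + ((x.val % 2 : ℕ) : ZMod n)), by
        rcases Nat.mod_two_eq_zero_or_one x.val with h | h
        · exact Or.inl ⟨((x.val / 2 : ℕ) : ZMod n), by rw [h]; norm_num⟩
        · exact Or.inr ⟨((x.val / 2 : ℕ) : ZMod n), by rw [h]; norm_num⟩⟩, ?_, ?_⟩, ?_⟩⟩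
  · rintro ⟨p, hp⟩
    rcases hp with ⟨r, rfl⟩ | ⟨r, rfl⟩
    · dsimp only
      rw [if_pos rfl, Nat.add_zero]
      have hX : (((2 * r.val : ℕ) : ZMod (2*n))).val = 2 * r.val :=
        ZMod.val_cast_of_lt (by have := ZMod.val_lt r; omega)
      apply Subtype.ext
      dsimp only
      rw [hX, show 2 * r.val / 2 = r.val by omega, show 2 * r.val % 2 = 0 by omega, hcv r]
      norm_num
    · dsimp only
      rw [if_neg (fun h => hone (by linear_combination h))]
      have hX : (((2 * r.val + 1 : ℕ) : ZMod (2*n))).val = 2 * r.val + 1 :=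
        ZMod.val_cast_of_lt (by have := ZMod.val_lt r; omega)
      apply Subtype.ext
      dsimp only
      rw [hX, show (2 * r.val + 1) / 2 = r.val by omega,
        show (2 * r.val + 1) % 2 = 1 by omega, hcv r]
      norm_num
  · intro x
    dsimp only
    have hq : (((x.val / 2 : ℕ) : ZMod n)).val = x.val / 2 :=
      ZMod.val_cast_of_lt (by have := ZMod.val_lt x; omega)
    rcases Nat.mod_two_eq_zero_or_one x.val with h | h
    · simp only [h]
      rw [if_pos (by norm_num), hq, show 2 * (x.val / 2) + 0 = x.val by omega]
      exact hcv2 x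
    · simp only [h]
      rw [if_neg (by intro hh; apply hone; push_cast at hh; linear_combination hh), hq,
        show 2 * (x.val / 2) + 1 = x.val by omega]
      exact hcv2 x
  · intro v w
    obtain ⟨p, hp⟩ := v
    obtain ⟨q, hq⟩ := w
    rcases hp with ⟨r, rfl⟩ | ⟨r, rfl⟩ <;> rcases hq with ⟨s, rfl⟩ | ⟨s, rfl⟩ <;>
      obtain ⟨a, ha, rfl⟩ : ∃ a : ℕ, a < n ∧ r = (a : ZMod n) :=
        ⟨r.val, ZMod.val_lt r, (hcv r).symm⟩ <;>
      obtain ⟨b, hb, rfl⟩ : ∃ b : ℕ, b < n ∧ s = (b : ZMod n) :=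
        ⟨s.val, ZMod.val_lt s, (hcv s).symm⟩ <;>
      simp only [Equiv.coe_fn_mk, SimpleGraph.comap_adj, Function.Embedding.coe_subtype,
        mobiusLadder, circGraph, if_true, add_zero, ne_eq, Prod.mk.injEq] <;>
      rw [ZMod.val_cast_of_lt ha, ZMod.val_cast_of_lt hb]
    · -- A-A
      have hfst : ((a : ZMod n) = (b : ZMod n)) ↔ (a = b ∨ a = b + n ∨ b = a + n) :=
        castEq a b (by omega) (by omega)
      have hsnd : ((a : ZMod n) + i = (b : ZMod n) + i) ↔ (a = b ∨ a = b + n ∨ b = a + n) := by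
        rw [add_left_inj]; exact castEq a b (by omega) (by omega)
      have hsum : ((a : ZMod n) + ((a : ZMod n) + i) = (b : ZMod n) + ((b : ZMod n) + i)) ↔
          (2*a = 2*b ∨ 2*a = 2*b + n ∨ 2*b = 2*a + n) := by
        rw [show ((a : ZMod n) + ((a : ZMod n) + i) = (b : ZMod n) + ((b : ZMod n) + i)) ↔
            (((2*a : ℕ) : ZMod n) = ((2*b : ℕ) : ZMod n)) by
          push_cast; constructor <;> intro h <;> linear_combination h]
        exact castEq (2*a) (2*b) (by omega) (by omega)
      rw [castEq (m := 2*n) (2*a) (2*b) (by omega) (by omega),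
        mdiff1 (2*a) (2*b) (by omega) (by omega),
        mdiffneg (2*a) (2*b) (by omega) (by omega),
        mdiffn (2*a) (2*b) (by omega) (by omega),
        hfst, hsnd, hsum]
      omega
    · -- A-B
      rw [if_neg (fun h => hone (by linear_combination h))]
      have hfst : ((a : ZMod n) = (b : ZMod n)) ↔ (a = b ∨ a = b + n ∨ b = a + n) :=
        castEq a b (by omega) (by omega)
      have hsnd : ((a : ZMod n) + i = (b : ZMod n) + i + 1) ↔
          (a = b+1 ∨ a = b+1+n ∨ b+1 = a+n) := by
        rw [show ((b : ZMod n) + i + 1) = (((b+1 : ℕ)) : ZMod n) + i by push_cast; ring,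
          add_left_inj]
        exact castEq a (b+1) (by omega) (by omega)
      have hsum : ((a : ZMod n) + ((a : ZMod n) + i) = (b : ZMod n) + ((b : ZMod n) + i + 1)) ↔
          (2*a = 2*b+1 ∨ 2*a = 2*b+1 + n ∨ 2*b+1 = 2*a + n) := by
        rw [show ((a : ZMod n) + ((a : ZMod n) + i) = (b : ZMod n) + ((b : ZMod n) + i + 1)) ↔
            (((2*a : ℕ) : ZMod n) = ((2*b+1 : ℕ) : ZMod n)) by
          push_cast; constructor <;> intro h <;> linear_combination h]
        exact castEq (2*a) (2*b+1) (by omega) (by omega)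
      rw [castEq (m := 2*n) (2*a) (2*b+1) (by omega) (by omega),
        mdiff1 (2*a) (2*b+1) (by omega) (by omega),
        mdiffneg (2*a) (2*b+1) (by omega) (by omega),
        mdiffn (2*a) (2*b+1) (by omega) (by omega),
        hfst, hsnd, hsum]
      omega
    · -- B-A
      rw [if_neg (fun h => hone (by linear_combination h))]
      have hfst : ((a : ZMod n) = (b : ZMod n)) ↔ (a = b ∨ a = b + n ∨ b = a + n) :=
        castEq a b (by omega) (by omega)
      have hsnd : ((a : ZMod n) + i + 1 = (b : ZMod n) + i) ↔
          (a+1 = b ∨ a+1 = b+n ∨ b = a+1+n) := by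
        rw [show ((a : ZMod n) + i + 1) = (((a+1 : ℕ)) : ZMod n) + i by push_cast; ring,
          add_left_inj]
        exact castEq (a+1) b (by omega) (by omega)
      have hsum : ((a : ZMod n) + ((a : ZMod n) + i + 1) = (b : ZMod n) + ((b : ZMod n) + i)) ↔
          (2*a+1 = 2*b ∨ 2*a+1 = 2*b + n ∨ 2*b = 2*a+1 + n) := by
        rw [show ((a : ZMod n) + ((a : ZMod n) + i + 1) = (b : ZMod n) + ((b : ZMod n) + i)) ↔
            (((2*a+1 : ℕ) : ZMod n) = ((2*b : ℕ) : ZMod n)) by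
          push_cast; constructor <;> intro h <;> linear_combination h]
        exact castEq (2*a+1) (2*b) (by omega) (by omega)
      rw [castEq (m := 2*n) (2*a+1) (2*b) (by omega) (by omega),
        mdiff1 (2*a+1) (2*b) (by omega) (by omega),
        mdiffneg (2*a+1) (2*b) (by omega) (by omega),
        mdiffn (2*a+1) (2*b) (by omega) (by omega),
        hfst, hsnd, hsum]
      omega
    · -- B-B
      rw [if_neg (fun h => hone (by linear_combination h)),
        if_neg (fun h => hone (by linear_combination h))]
      have hfst : ((a : ZMod n) = (b : ZMod n)) ↔ (a = b ∨ a = b + n ∨ b = a + n) :=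
        castEq a b (by omega) (by omega)
      have hsnd : ((a : ZMod n) + i + 1 = (b : ZMod n) + i + 1) ↔
          (a = b ∨ a = b + n ∨ b = a + n) := by
        rw [add_left_inj, add_left_inj]
        exact castEq a b (by omega) (by omega)
      have hsum : ((a : ZMod n) + ((a : ZMod n) + i + 1) = (b : ZMod n) + ((b : ZMod n) + i + 1)) ↔
          (2*a+1 = 2*b+1 ∨ 2*a+1 = 2*b+1 + n ∨ 2*b+1 = 2*a+1 + n) := by
        rw [show ((a : ZMod n) + ((a : ZMod n) + i + 1) = (b : ZMod n) + ((b : ZMod n) + i + 1)) ↔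
            (((2*a+1 : ℕ) : ZMod n) = ((2*b+1 : ℕ) : ZMod n)) by
          push_cast; constructor <;> intro h <;> linear_combination h]
        exact castEq (2*a+1) (2*b+1) (by omega) (by omega)
      rw [castEq (m := 2*n) (2*a+1) (2*b+1) (by omega) (by omega),
        mdiff1 (2*a+1) (2*b+1) (by omega) (by omega),
        mdiffneg (2*a+1) (2*b+1) (by omega) (by omega),
        mdiffn (2*a+1) (2*b+1) (by omega) (by omega),
        hfst, hsnd, hsum]
      omega
end

section
/- Every Latin square L of even order n ≥ 2 with χ(L) ≤ n + 2 contains a partial transversal of length n − 1. -/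
/-- The Latin square graph of `L : Fin n → Fin n → Fin n`: vertices are cells, and two
distinct cells are adjacent iff they share a row, a column, or a symbol. -/
def latinGraph (n : ℕ) (L : Fin n → Fin n → Fin n) : SimpleGraph (Fin n × Fin n) where
  Adj x y := x ≠ y ∧ (x.1 = y.1 ∨ x.2 = y.2 ∨ L x.1 x.2 = L y.1 y.2)
  symm := by
    refine ⟨?_⟩
    rintro x y ⟨hne, h⟩
    refine ⟨hne.symm, ?_⟩
    rcases h with h | h | h
    · exact Or.inl h.symm
    · exact Or.inr (Or.inl h.symm)
    · exact Or.inr (Or.inr h.symm)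
  loopless := by refine ⟨?_⟩; rintro x ⟨hne, -⟩; exact hne rfl

/-- Every Latin square of even order `n ≥ 2` with `χ(L) ≤ n + 2` contains a partial
transversal of length `n - 1`. -/
theorem stmt_19 (n : ℕ) (hn : 2 ≤ n) (heven : Even n) (L : Fin n → Fin n → Fin n)
    (hrow : ∀ r, Function.Bijective (L r))
    (hcol : ∀ c, Function.Bijective fun r => L r c)
    (hchi : (latinGraph n L).chromaticNumber ≤ (n : ℕ∞) + 2) :
    ∃ T : Finset (Fin n × Fin n),
      (∀ p ∈ T, ∀ q ∈ T, ¬ (latinGraph n L).Adj p q) ∧ T.card = n - 1 := by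
  have hchi' : (latinGraph n L).chromaticNumber ≤ ((n + 2 : ℕ) : ℕ∞) := by
    push_cast; exact hchi
  have hcol2 : (latinGraph n L).Colorable (n + 2) :=
    (SimpleGraph.chromaticNumber_le_iff_colorable).mp hchi'
  obtain ⟨C⟩ := hcol2
  -- pigeonhole: some color class has more than n - 2 elements
  have hmaps : ∀ x ∈ (Finset.univ : Finset (Fin n × Fin n)),
      C x ∈ (Finset.univ : Finset (Fin (n + 2))) := fun _ _ => Finset.mem_univ _
  have hcard : (Finset.univ : Finset (Fin (n + 2))).card * (n - 2) <
      (Finset.univ : Finset (Fin n × Fin n)).card := by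
    simp only [Finset.card_univ, Fintype.card_fin, Fintype.card_prod]
    obtain ⟨m, rfl⟩ := Nat.exists_eq_add_of_le hn
    have h2 : 2 + m - 2 = m := by omega
    rw [h2]
    nlinarith
  obtain ⟨y, -, hy⟩ := Finset.exists_lt_card_fiber_of_mul_lt_card_of_maps_to hmaps hcard
  have hle : n - 1 ≤ (Finset.univ.filter fun x => C x = y).card := by omega
  obtain ⟨T, hTsub, hTcard⟩ := Finset.exists_subset_card_eq hle
  refine ⟨T, ?_, hTcard⟩
  intro p hp q hq hadj
  have hpq : C p = C q := by
    have h1 := Finset.mem_filter.mp (hTsub hp)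
    have h2 := Finset.mem_filter.mp (hTsub hq)
    rw [h1.2, h2.2]
  exact C.valid hadj hpq
end
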